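/- arXiv:2512.06005 — 11 statements merged into one kernel-verified Lean document; each statement's English description precedes it below -/
import Mathlib

section
/- Let (Θ, ≲) be a nonempty partially ordered set, X a nonempty finite set, and U : X × Θ → ℝ. Then the following are equivalent: (a) for all θ ≲ θ′ in Θ, the function U(·,θ) is less risk-averse than U(·,θ′); (b) both of the following hold: (i) for all x, y ∈ X, the function θ ↦ U(y,θ) − U(x,θ) is single-crossing, and (ii) for each y ∈ X, the family of functions {θ ↦ U(y,θ) − U(x,θ) : x ∈ X} satisfies signed-ratio monotonicity. -/
open Finset

/-- A lottery on a finite set `X`: a function `p : X → [0,1]` summing to 1. -/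
def IsLottery {X : Type*} [Fintype X] (p : X → ℝ) : Prop :=
  (∀ x, 0 ≤ p x ∧ p x ≤ 1) ∧ ∑ x, p x = 1

/-- `u` is less risk-averse than `v` (Yaari). -/
def LessRiskAverse {X : Type*} [Fintype X] (u v : X → ℝ) : Prop :=
  ∀ (y : X) (p : X → ℝ), IsLottery p →
    (u y ≥ ∑ x, u x * p x → v y ≥ ∑ x, v x * p x) ∧
    (u y > ∑ x, u x * p x → v y > ∑ x, v x * p x)

/-- A function `φ : Θ → ℝ` on a poset is single-crossing. -/
def SingleCrossing {Θ : Type*} [PartialOrder Θ] (φ : Θ → ℝ) : Prop :=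
  ∀ ⦃θ θ' : Θ⦄, θ ≤ θ' → (φ θ ≥ 0 → φ θ' ≥ 0) ∧ (φ θ > 0 → φ θ' > 0)

/-- A family `Φ` of functions `Θ → ℝ` satisfies signed-ratio monotonicity. -/
def SignedRatioMonotone {Θ : Type*} [PartialOrder Θ] (Φ : Set (Θ → ℝ)) : Prop :=
  ∀ φ ∈ Φ, ∀ ψ ∈ Φ, ∀ ⦃θ θ' : Θ⦄, θ ≤ θ' →
    φ θ < 0 → 0 < ψ θ → -φ θ * ψ θ' ≥ -φ θ' * ψ θ

/-- Sum against an indicator. -/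
lemma indSum {X : Type*} [Fintype X] [DecidableEq X] (u : X → ℝ) (x : X) :
    ∑ z, u z * (if z = x then (1:ℝ) else 0) = u x := by
  simp [mul_ite]

/-- Aggregation: a nonnegative combination of a single-crossing,
signed-ratio-monotone family is single-crossing. -/
lemma key_aggregate {Θ ι : Type*} [PartialOrder Θ] (s : Finset ι)
    (φ : ι → Θ → ℝ) (c : ι → ℝ) (hc : ∀ i, 0 ≤ c i)
    (hsc : ∀ i ∈ s, SingleCrossing (φ i))
    (hsrm : ∀ i ∈ s, ∀ j ∈ s, ∀ ⦃θ θ' : Θ⦄, θ ≤ θ' →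
      φ i θ < 0 → 0 < φ j θ → -φ i θ * φ j θ' ≥ -φ i θ' * φ j θ)
    {θ θ' : Θ} (hθ : θ ≤ θ') :
    ((0 ≤ ∑ i ∈ s, c i * φ i θ) → 0 ≤ ∑ i ∈ s, c i * φ i θ') ∧
    ((0 < ∑ i ∈ s, c i * φ i θ) → 0 < ∑ i ∈ s, c i * φ i θ') := by
  classical
  set N := s.filter (fun i => φ i θ' < 0) with hNdef
  set P := s.filter (fun i => 0 < φ i θ) with hPdef
  have hNs : N ⊆ s := filter_subset _ _
  have hPs : P ⊆ s := filter_subset _ _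
  have hNmem : ∀ i ∈ N, i ∈ s ∧ φ i θ' < 0 := fun i hi => mem_filter.mp hi
  have hPmem : ∀ i ∈ P, i ∈ s ∧ 0 < φ i θ := fun i hi => mem_filter.mp hi
  have hNneg : ∀ i ∈ N, φ i θ < 0 := by
    intro i hi
    by_contra h
    exact absurd ((hsc i (hNmem i hi).1 hθ).1 (not_lt.mp h)) (not_le.mpr (hNmem i hi).2)
  have hPpos : ∀ j ∈ P, 0 < φ j θ' := by
    intro j hj
    exact (hsc j (hPmem j hj).1 hθ).2 (hPmem j hj).2
  have hdis : Disjoint N P := by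
    rw [disjoint_left]
    intro i hiN hiP
    exact absurd (hPpos i hiP) (not_lt.mpr (le_of_lt (hNmem i hiN).2))
  set R := s \ (N ∪ P) with hRdef
  have hRmem : ∀ i ∈ R, φ i θ ≤ 0 ∧ 0 ≤ φ i θ' := by
    intro i hi
    rw [hRdef, mem_sdiff, mem_union, hNdef, hPdef, mem_filter, mem_filter] at hi
    push_neg at hi
    exact ⟨hi.2.2 hi.1, hi.2.1 hi.1⟩
  have hsplit : ∀ f : ι → ℝ,
      ∑ i ∈ s, f i = (∑ i ∈ N, f i + ∑ i ∈ P, f i) + ∑ i ∈ R, f i := by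
    intro f
    rw [← sum_union hdis, add_comm, sum_sdiff (union_subset hNs hPs)]
  set A := ∑ i ∈ N, c i * φ i θ with hAdef
  set A' := ∑ i ∈ N, c i * φ i θ' with hA'def
  set B := ∑ i ∈ P, c i * φ i θ with hBdef
  set B' := ∑ i ∈ P, c i * φ i θ' with hB'def
  set C := ∑ i ∈ R, c i * φ i θ with hCdef
  set C' := ∑ i ∈ R, c i * φ i θ' with hC'def
  have eθ : ∑ i ∈ s, c i * φ i θ = A + B + C := hsplit _
  have eθ' : ∑ i ∈ s, c i * φ i θ' = A' + B' + C' := hsplit _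
  have hA : A ≤ 0 := sum_nonpos fun i hi =>
    mul_nonpos_of_nonneg_of_nonpos (hc i) (hNneg i hi).le
  have hA' : A' ≤ 0 := sum_nonpos fun i hi =>
    mul_nonpos_of_nonneg_of_nonpos (hc i) (hNmem i hi).2.le
  have hB : 0 ≤ B := sum_nonneg fun i hi => mul_nonneg (hc i) (hPmem i hi).2.le
  have hB' : 0 ≤ B' := sum_nonneg fun i hi => mul_nonneg (hc i) (hPpos i hi).le
  have hC : C ≤ 0 := sum_nonpos fun i hi =>
    mul_nonpos_of_nonneg_of_nonpos (hc i) (hRmem i hi).1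
  have hC' : 0 ≤ C' := sum_nonneg fun i hi => mul_nonneg (hc i) (hRmem i hi).2
  have hkey : (-A') * B ≤ (-A) * B' := by
    have e1 : -A = ∑ i ∈ N, c i * (-φ i θ) := by
      rw [hAdef, ← sum_neg_distrib]
      exact sum_congr rfl fun i _ => by ring
    have e1' : -A' = ∑ i ∈ N, c i * (-φ i θ') := by
      rw [hA'def, ← sum_neg_distrib]
      exact sum_congr rfl fun i _ => by ring
    rw [e1, e1', sum_mul_sum, sum_mul_sum]
    apply sum_le_sum
    intro i hi
    apply sum_le_sum
    intro j hj
    have hs := hsrm i (hNs hi) j (hPs hj) hθ (hNneg i hi) (hPmem j hj).2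
    nlinarith [mul_nonneg (hc i) (hc j)]
  by_cases hex : ∃ j ∈ P, 0 < c j
  · obtain ⟨j, hjP, hcj⟩ := hex
    have hBpos : 0 < B :=
      sum_pos' (fun i hi => mul_nonneg (hc i) (hPmem i hi).2.le)
        ⟨j, hjP, mul_pos hcj (hPmem j hjP).2⟩
    have hB'pos : 0 < B' :=
      sum_pos' (fun i hi => mul_nonneg (hc i) (hPpos i hi).le)
        ⟨j, hjP, mul_pos hcj (hPpos j hjP)⟩
    constructor
    · intro hS
      rw [eθ] at hS
      rw [eθ']
      nlinarith [hkey, mul_nonneg hB'pos.le hS, mul_nonneg hBpos.le hC',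
        mul_nonpos_of_nonpos_of_nonneg hC hB'pos.le]
    · intro hS
      rw [eθ] at hS
      rw [eθ']
      nlinarith [hkey, mul_pos hB'pos hS, mul_nonneg hBpos.le hC',
        mul_nonpos_of_nonpos_of_nonneg hC hB'pos.le]
  · push_neg at hex
    have hc0 : ∀ j ∈ P, c j = 0 := fun j hj => le_antisymm (hex j hj) (hc j)
    have hB0 : B = 0 := sum_eq_zero fun j hj => by rw [hc0 j hj, zero_mul]
    have hB'0 : B' = 0 := sum_eq_zero fun j hj => by rw [hc0 j hj, zero_mul]
    constructor
    · intro hS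
      rw [eθ] at hS
      have hA0 : A = 0 := le_antisymm hA (by linarith)
      have hcN : ∀ i ∈ N, c i * φ i θ = 0 :=
        (sum_eq_zero_iff_of_nonpos fun i hi =>
          mul_nonpos_of_nonneg_of_nonpos (hc i) (hNneg i hi).le).mp hA0
      have hA'0 : A' = 0 := sum_eq_zero fun i hi => by
        have hci : c i = 0 := by
          rcases mul_eq_zero.mp (hcN i hi) with h | h
          · exact h
          · exact absurd h (hNneg i hi).ne
        rw [hci, zero_mul]
      rw [eθ']
      linarith
    · intro hS
      rw [eθ] at hS
      linarith

theorem stmt_0 {Θ X : Type*} [PartialOrder Θ] [Nonempty Θ] [Fintype X] [Nonempty X]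
    (U : X × Θ → ℝ) :
    (∀ θ θ' : Θ, θ ≤ θ' →
        LessRiskAverse (fun x => U (x, θ)) (fun x => U (x, θ'))) ↔
      ((∀ x y : X, SingleCrossing (fun θ => U (y, θ) - U (x, θ))) ∧
        (∀ y : X, SignedRatioMonotone
          {φ : Θ → ℝ | ∃ x : X, φ = fun θ => U (y, θ) - U (x, θ)})) := by
  classical
  constructor
  · intro h
    constructor
    · -- single crossing
      intro x y θ θ' hθ
      set p : X → ℝ := fun z => if z = x then (1:ℝ) else 0 with hpdef
      have hlot : IsLottery p := by
        constructor
        · intro z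
          simp only [hpdef]
          split_ifs <;> norm_num
        · simp [hpdef]
      have hmain := h θ θ' hθ y p hlot
      have e : ∀ t : Θ, ∑ z, U (z, t) * p z = U (x, t) := by
        intro t
        exact indSum (fun z => U (z, t)) x
      simp only at hmain
      rw [e θ, e θ'] at hmain
      constructor
      · intro hge
        have := hmain.1 (by simpa [ge_iff_le, sub_nonneg] using hge)
        simpa [ge_iff_le, sub_nonneg] using this
      · intro hgt
        have := hmain.2 (by simpa [gt_iff_lt, sub_pos] using hgt)
        simpa [gt_iff_lt, sub_pos] using this
    · -- signed ratio monotonicity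
      intro y φ hφ ψ hψ θ θ' hθ hφneg hψpos
      obtain ⟨x₁, rfl⟩ := hφ
      obtain ⟨x₂, rfl⟩ := hψ
      have h1 : U (y, θ) - U (x₁, θ) < 0 := hφneg
      have h2 : 0 < U (y, θ) - U (x₂, θ) := hψpos
      have hne : x₁ ≠ x₂ := by
        rintro rfl
        linarith
      set d : ℝ := (U (y, θ) - U (x₂, θ)) - (U (y, θ) - U (x₁, θ)) with hddef
      have hd : 0 < d := by rw [hddef]; linarith
      set a : ℝ := (U (y, θ) - U (x₂, θ)) / d with hadef
      set b : ℝ := (-(U (y, θ) - U (x₁, θ))) / d with hbdef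
      have ha0 : 0 < a := div_pos h2 hd
      have hb0 : 0 < b := div_pos (by linarith) hd
      have hab : a + b = 1 := by
        have hnum : (U (y, θ) - U (x₂, θ)) + -(U (y, θ) - U (x₁, θ)) = d := by
          rw [hddef]; ring
        rw [hadef, hbdef, ← add_div, hnum, div_self hd.ne']
      set p : X → ℝ := fun z => a * (if z = x₁ then (1:ℝ) else 0)
        + b * (if z = x₂ then (1:ℝ) else 0) with hpdef
      have hlot : IsLottery p := by
        constructor
        · intro z
          simp only [hpdef]
          split_ifs with hz1 hz2 hz2
          · exact absurd (hz1.symm.trans hz2) hne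
          · constructor <;> nlinarith
          · constructor <;> nlinarith
          · constructor <;> nlinarith
        · simp only [hpdef]
          rw [sum_add_distrib, ← mul_sum, ← mul_sum]
          simp [hab]
      have e : ∀ t : Θ, ∑ z, U (z, t) * p z = a * U (x₁, t) + b * U (x₂, t) := by
        intro t
        simp only [hpdef]
        have : ∀ z ∈ (univ : Finset X), U (z, t) * (a * (if z = x₁ then (1:ℝ) else 0)
            + b * (if z = x₂ then (1:ℝ) else 0))
            = a * (U (z, t) * (if z = x₁ then (1:ℝ) else 0))
            + b * (U (z, t) * (if z = x₂ then (1:ℝ) else 0)) := by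
          intro z _
          ring
        rw [sum_congr rfl this, sum_add_distrib, ← mul_sum, ← mul_sum,
          indSum, indSum]
      have hmain := h θ θ' hθ y p hlot
      simp only at hmain
      rw [e θ, e θ'] at hmain
      have hzero : a * (U (y, θ) - U (x₁, θ)) + b * (U (y, θ) - U (x₂, θ)) = 0 := by
        rw [hadef, hbdef]
        field_simp
        ring
      have heq : U (y, θ) = a * U (x₁, θ) + b * U (x₂, θ) := by
        linear_combination hzero - U (y, θ) * hab
      have hconc := hmain.1 (ge_of_eq heq)
      have heq' : a * (U (y, θ') - U (x₁, θ')) + b * (U (y, θ') - U (x₂, θ'))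
          = U (y, θ') - (a * U (x₁, θ') + b * U (x₂, θ')) := by
        linear_combination U (y, θ') * hab
      have h3 : 0 ≤ a * (U (y, θ') - U (x₁, θ')) + b * (U (y, θ') - U (x₂, θ')) := by
        rw [heq']
        linarith
      have h4 : (a * (U (y, θ') - U (x₁, θ')) + b * (U (y, θ') - U (x₂, θ'))) * d
          = (U (y, θ) - U (x₂, θ)) * (U (y, θ') - U (x₁, θ'))
            - (U (y, θ) - U (x₁, θ)) * (U (y, θ') - U (x₂, θ')) := by
        rw [hadef, hbdef]
        field_simp
        ring
      have h5 : 0 ≤ (U (y, θ) - U (x₂, θ)) * (U (y, θ') - U (x₁, θ'))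
          - (U (y, θ) - U (x₁, θ)) * (U (y, θ') - U (x₂, θ')) := by
        rw [← h4]
        exact mul_nonneg h3 hd.le
      show -(U (y, θ) - U (x₁, θ)) * (U (y, θ') - U (x₂, θ'))
          ≥ -(U (y, θ') - U (x₁, θ')) * (U (y, θ) - U (x₂, θ))
      nlinarith
  · rintro ⟨hSC, hSRM⟩ θ θ' hθ y p hlot
    have hk := key_aggregate univ (fun x t => U (y, t) - U (x, t)) p
      (fun x => (hlot.1 x).1)
      (fun x _ => hSC x y)
      (fun i _ j _ => hSRM y _ ⟨i, rfl⟩ _ ⟨j, rfl⟩) hθ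
    have e : ∀ t : Θ, ∑ x, p x * (U (y, t) - U (x, t))
        = U (y, t) - ∑ x, U (x, t) * p x := by
      intro t
      have : ∀ x ∈ (univ : Finset X),
          p x * (U (y, t) - U (x, t)) = p x * U (y, t) - U (x, t) * p x := by
        intro x _
        ring
      rw [sum_congr rfl this, sum_sub_distrib, ← sum_mul, hlot.2, one_mul]
    simp only at hk ⊢
    constructor
    · intro hge
      have h0 : 0 ≤ ∑ x, p x * (U (y, θ) - U (x, θ)) := by
        rw [e θ]
        linarith
      have := hk.1 h0
      rw [e θ'] at this
      linarith
    · intro hgt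
      have h0 : 0 < ∑ x, p x * (U (y, θ) - U (x, θ)) := by
        rw [e θ]
        linarith
      have := hk.2 h0
      rw [e θ'] at this
      linarith
end

section
/- Let (Θ, ≲) be a nonempty partially ordered set, X a nonempty finite set, and U : X × Θ → ℝ. If for all θ ≲ θ′ in Θ the function U(·,θ) is less risk-averse than U(·,θ′), then (i) for all x, y ∈ X the function θ ↦ U(y,θ) − U(x,θ) is single-crossing, and (ii) for each y ∈ X the family {θ ↦ U(y,θ) − U(x,θ) : x ∈ X} satisfies signed-ratio monotonicity. -/
open Finset

lemma ite_mul_aux (c1 c2 u : ℝ) (i j : Prop) [Decidable i] [Decidable j] :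
    u * (c1 * (if i then (1:ℝ) else 0) + c2 * (if j then (1:ℝ) else 0))
      = c1 * (if i then u else 0) + c2 * (if j then u else 0) := by
  by_cases hi : i <;> by_cases hj : j <;> simp [hi, hj] <;> ring

theorem stmt_1 {Θ X : Type*} [PartialOrder Θ] [Nonempty Θ] [Fintype X] [Nonempty X]
    (U : X × Θ → ℝ)
    (h : ∀ θ θ' : Θ, θ ≤ θ' →
      LessRiskAverse (fun x => U (x, θ)) (fun x => U (x, θ'))) :
    (∀ x y : X, SingleCrossing (fun θ => U (y, θ) - U (x, θ))) ∧
      (∀ y : X, SignedRatioMonotone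
        {φ : Θ → ℝ | ∃ x : X, φ = fun θ => U (y, θ) - U (x, θ)}) := by
  classical
  constructor
  · intro x y θ θ' hθ
    have hp : IsLottery (fun z : X => if z = x then (1:ℝ) else 0) := by
      constructor
      · intro z; by_cases hz : z = x <;> simp [hz]
      · simp
    have h1 := h θ θ' hθ y _ hp
    simp only [mul_ite, mul_one, mul_zero, Finset.sum_ite_eq', Finset.mem_univ,
      if_true] at h1
    constructor
    · intro hge
      simp only at hge ⊢
      have := h1.1 (by linarith)
      linarith
    · intro hgt
      simp only at hgt ⊢
      have := h1.2 (by linarith)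
      linarith
  · intro y φ hφ ψ hψ θ θ' hθ hφneg hψpos
    obtain ⟨x₁, rfl⟩ := hφ
    obtain ⟨x₂, rfl⟩ := hψ
    simp only at hφneg hψpos ⊢
    set A : ℝ := U (x₁, θ) - U (y, θ) with hA
    set B : ℝ := U (y, θ) - U (x₂, θ) with hB
    have hApos : 0 < A := by simp only [hA]; linarith
    have hBpos : 0 < B := by simp only [hB]; linarith
    have hAB : 0 < A + B := by linarith
    have hp : IsLottery (fun z : X =>
        B / (A + B) * (if z = x₁ then (1:ℝ) else 0)
          + A / (A + B) * (if z = x₂ then (1:ℝ) else 0)) := by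
      constructor
      · intro z
        constructor
        · positivity
        · have h1 : (if z = x₁ then (1:ℝ) else 0) ≤ 1 := by split <;> norm_num
          have h2 : (if z = x₂ then (1:ℝ) else 0) ≤ 1 := by split <;> norm_num
          nlinarith [div_pos hBpos hAB, div_pos hApos hAB,
            (by rw [← add_div, add_comm, div_self hAB.ne'] : B / (A + B) + A / (A + B) = 1)]
      · rw [Finset.sum_add_distrib]
        simp only [mul_ite, mul_one, mul_zero, Finset.sum_ite_eq', Finset.mem_univ,
          if_true]
        rw [← add_div, add_comm, div_self hAB.ne']
    have h1 := (h θ θ' hθ y _ hp).1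
    have esum : ∀ τ : Θ, ∑ z, U (z, τ) *
        (B / (A + B) * (if z = x₁ then (1:ℝ) else 0)
          + A / (A + B) * (if z = x₂ then (1:ℝ) else 0))
        = B / (A + B) * U (x₁, τ) + A / (A + B) * U (x₂, τ) := by
      intro τ
      have key : ∀ z, U (z, τ) *
          (B / (A + B) * (if z = x₁ then (1:ℝ) else 0)
            + A / (A + B) * (if z = x₂ then (1:ℝ) else 0))
          = B / (A + B) * (if z = x₁ then U (z, τ) else 0)
            + A / (A + B) * (if z = x₂ then U (z, τ) else 0) := by
        intro z
        exact ite_mul_aux _ _ _ _ _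
      rw [Finset.sum_congr rfl (fun z _ => key z), Finset.sum_add_distrib,
        ← Finset.mul_sum, ← Finset.mul_sum]
      simp
    rw [esum θ, esum θ'] at h1
    have heq : U (y, θ) = B / (A + B) * U (x₁, θ) + A / (A + B) * U (x₂, θ) := by
      rw [div_mul_eq_mul_div, div_mul_eq_mul_div, ← add_div,
        eq_div_iff (ne_of_gt hAB)]
      simp only [hA, hB]; ring
    have h2 := h1 (le_of_eq heq.symm)
    have h3 : B * U (x₁, θ') + A * U (x₂, θ') ≤ (A + B) * U (y, θ') := by
      have := mul_le_mul_of_nonneg_left h2 (le_of_lt hAB)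
      have e : (A + B) * (B / (A + B) * U (x₁, θ') + A / (A + B) * U (x₂, θ'))
          = B * U (x₁, θ') + A * U (x₂, θ') := by field_simp
      linarith [e ▸ this]
    simp only [hA, hB] at h3 ⊢
    nlinarith [h3]
end

section
/- Let (Θ, ≲) be a nonempty partially ordered set, X a nonempty finite set, and U : X × Θ → ℝ. Suppose that (i) for all x, y ∈ X the function θ ↦ U(y,θ) − U(x,θ) is single-crossing, and (ii) for each y ∈ X the family {θ ↦ U(y,θ) − U(x,θ) : x ∈ X} satisfies signed-ratio monotonicity. Then for all θ ≲ θ′ in Θ, the function U(·,θ) is less risk-averse than U(·,θ′). -/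
open Finset

/-- Quah–Strulovici aggregation: a nonnegative combination of single-crossing
functions satisfying pairwise signed-ratio monotonicity is single-crossing. -/
lemma aggregate_single_crossing {Θ X : Type*} [PartialOrder Θ] [Fintype X]
    (p : X → ℝ) (hp : ∀ x, 0 ≤ p x) (φ : X → Θ → ℝ)
    (hsc : ∀ x, SingleCrossing (φ x))
    (hsrm : ∀ x x' : X, ∀ ⦃θ θ' : Θ⦄, θ ≤ θ' → φ x θ < 0 → 0 < φ x' θ →
      -φ x θ * φ x' θ' ≥ -φ x θ' * φ x' θ) :
    SingleCrossing (fun θ => ∑ x, p x * φ x θ) := by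
  intro θ θ' hle
  by_cases hB : (Finset.univ.filter (fun x => 0 < p x ∧ 0 < φ x θ)).Nonempty
  · obtain ⟨j, hjmem, hjmin⟩ := Finset.exists_min_image _ (fun x => φ x θ' / φ x θ) hB
    simp only [Finset.mem_filter] at hjmem
    obtain ⟨-, hpj, hjθ⟩ := hjmem
    have hjθ' : 0 < φ j θ' := (hsc j hle).2 hjθ
    set lam := φ j θ' / φ j θ with hlam
    have hlam0 : 0 < lam := div_pos hjθ' hjθ
    have key : ∀ x, lam * (p x * φ x θ) ≤ p x * φ x θ' := by
      intro x
      rcases eq_or_lt_of_le (hp x) with h0 | h0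
      · simp [← h0]
      · have hx : lam * φ x θ ≤ φ x θ' := by
          rcases lt_trichotomy (φ x θ) 0 with hneg | hz | hpos
          · have := hsrm x j hle hneg hjθ
            rw [hlam, div_mul_eq_mul_div, div_le_iff₀ hjθ]
            nlinarith
          · have := (hsc x hle).1 (le_of_eq hz.symm)
            simpa [hz] using this
          · have := hjmin x (by simp [h0, hpos])
            rw [hlam, div_mul_eq_mul_div, div_le_iff₀ hjθ]
            have := (div_le_div_iff₀ hjθ hpos).1 this
            nlinarith
        calc lam * (p x * φ x θ) = p x * (lam * φ x θ) := by ring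
        _ ≤ p x * φ x θ' := by exact mul_le_mul_of_nonneg_left hx (le_of_lt h0)
    have hsum : lam * ∑ x, p x * φ x θ ≤ ∑ x, p x * φ x θ' := by
      rw [Finset.mul_sum]
      exact Finset.sum_le_sum fun x _ => key x
    constructor
    · intro h; exact le_trans (by positivity) hsum
    · intro h; exact lt_of_lt_of_le (by positivity) hsum
  · have hterm : ∀ x, p x * φ x θ ≤ 0 := by
      intro x
      rcases eq_or_lt_of_le (hp x) with h0 | h0
      · simp [← h0]
      · have : ¬ (0 < φ x θ) := fun hpos => hB ⟨x, by simp [h0, hpos]⟩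
        exact mul_nonpos_of_nonneg_of_nonpos (le_of_lt h0) (le_of_not_gt this)
    have hsle : (∑ x, p x * φ x θ) ≤ 0 := Finset.sum_nonpos fun x _ => hterm x
    constructor
    · intro h
      have heq : (∑ x, p x * φ x θ) = 0 := le_antisymm hsle h
      have hzero := (Finset.sum_eq_zero_iff_of_nonpos (fun x _ => hterm x)).1 heq
      apply Finset.sum_nonneg
      intro x _
      rcases eq_or_lt_of_le (hp x) with h0 | h0
      · simp [← h0]
      · have hx0 : φ x θ = 0 := by
          have := hzero x (Finset.mem_univ x)
          rcases mul_eq_zero.1 this with h | h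
          · exact absurd h (ne_of_gt h0)
          · exact h
        have := (hsc x hle).1 (le_of_eq hx0.symm)
        positivity
    · intro h; exact absurd h (not_lt.2 hsle)

theorem stmt_2 {Θ X : Type*} [PartialOrder Θ] [Nonempty Θ] [Fintype X] [Nonempty X]
    (U : X × Θ → ℝ)
    (hsc : ∀ x y : X, SingleCrossing (fun θ => U (y, θ) - U (x, θ)))
    (hsrm : ∀ y : X, SignedRatioMonotone
      {φ : Θ → ℝ | ∃ x : X, φ = fun θ => U (y, θ) - U (x, θ)}) :
    ∀ θ θ' : Θ, θ ≤ θ' →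
      LessRiskAverse (fun x => U (x, θ)) (fun x => U (x, θ')) := by
  intro θ θ' hle y p hp
  set φ : X → Θ → ℝ := fun x t => U (y, t) - U (x, t) with hφ
  have hsrm' : ∀ x x' : X, ∀ ⦃t t' : Θ⦄, t ≤ t' → φ x t < 0 → 0 < φ x' t →
      -φ x t * φ x' t' ≥ -φ x t' * φ x' t := by
    intro x x' t t' hle' h1 h2
    exact hsrm y (φ x) ⟨x, rfl⟩ (φ x') ⟨x', rfl⟩ hle' h1 h2
  have agg := aggregate_single_crossing p (fun x => (hp.1 x).1) φ
    (fun x => hsc x y) hsrm' hle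
  have hrw : ∀ t : Θ, ∑ x, p x * φ x t = U (y, t) - ∑ x, U (x, t) * p x := by
    intro t
    simp only [hφ, mul_sub]
    rw [Finset.sum_sub_distrib, ← Finset.sum_mul, hp.2, one_mul]
    congr 1
    exact Finset.sum_congr rfl fun x _ => mul_comm _ _
  simp only at agg
  rw [hrw θ, hrw θ'] at agg
  constructor
  · intro h
    have := agg.1 (by linarith)
    linarith
  · intro h
    have := agg.2 (by linarith)
    linarith
end

section
/- Let X be a nonempty finite set and u, v : X → ℝ. Then u is less risk-averse than v if and only if both of the following hold: (I) for any x, y ∈ X, u(x) ≥ u(y) implies v(x) ≥ v(y), and u(x) > u(y) implies v(x) > v(y); (II) for any x, y, z ∈ X with u(x) < u(y) < u(z), one has (u(z) − u(y))/(u(y) − u(x)) ≥ (v(z) − v(y))/(v(y) − v(x)). -/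
open Finset

-- Reverse direction helper
private theorem stmt_6_rev {X : Type*} [Fintype X] (u v : X → ℝ)
    (h1 : ∀ x y : X, (u x ≥ u y → v x ≥ v y) ∧ (u x > u y → v x > v y))
    (h2 : ∀ x y z : X, u x < u y → u y < u z →
      (u z - u y) / (u y - u x) ≥ (v z - v y) / (v y - v x)) :
    LessRiskAverse u v := by
  intro y p hp
  obtain ⟨hp01, hpsum⟩ := hp
  have hshift : ∀ w : X → ℝ, ∑ x, (w x - w y) * p x = (∑ x, w x * p x) - w y := by
    intro w
    rw [Finset.sum_congr rfl (fun x _ => sub_mul (w x) (w y) (p x)),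
      Finset.sum_sub_distrib, ← Finset.mul_sum, hpsum, mul_one]
  by_cases hZ : (Finset.univ.filter (fun z => u y < u z)).Nonempty
  · by_cases hW : (Finset.univ.filter (fun x => u x < u y)).Nonempty
    · -- Case A
      set Z := Finset.univ.filter (fun z => u y < u z) with hZdef
      set lam := Z.sup' hZ (fun z => (v z - v y) / (u z - u y)) with hlam
      obtain ⟨z0, hz0⟩ := hZ
      have hz0' : u y < u z0 := (Finset.mem_filter.mp hz0).2
      have hlampos : 0 < lam := by
        have hr : 0 < (v z0 - v y) / (u z0 - u y) :=
          div_pos (by linarith [(h1 z0 y).2 hz0']) (by linarith)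
        exact lt_of_lt_of_le hr (Finset.le_sup' (fun z => (v z - v y) / (u z - u y)) hz0)
      have hpt : ∀ x, v x - v y ≤ lam * (u x - u y) := by
        intro x
        rcases lt_trichotomy (u x) (u y) with hlt | heq | hgt
        · have hvy : v x < v y := (h1 y x).2 hlt
          have hle : lam ≤ (v y - v x) / (u y - u x) := by
            apply Finset.sup'_le
            intro z hz
            have hz' : u y < u z := (Finset.mem_filter.mp hz).2
            have hvz : v y < v z := (h1 z y).2 hz'
            have := h2 x y z hlt hz'
            rw [ge_iff_le, div_le_div_iff₀ (by linarith) (by linarith)] at this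
            rw [div_le_div_iff₀ (by linarith) (by linarith)]
            nlinarith
          rw [le_div_iff₀ (by linarith)] at hle
          nlinarith
        · have hv1 : v x ≥ v y := (h1 x y).1 (le_of_eq heq.symm)
          have hv2 : v y ≥ v x := (h1 y x).1 (le_of_eq heq)
          rw [heq]
          nlinarith
        · have hxZ : x ∈ Z := Finset.mem_filter.mpr ⟨Finset.mem_univ x, hgt⟩
          have hle : (v x - v y) / (u x - u y) ≤ lam :=
            Finset.le_sup' (fun z => (v z - v y) / (u z - u y)) hxZ
          rw [div_le_iff₀ (by linarith)] at hle
          linarith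
      have hkey : (∑ x, v x * p x) - v y ≤ lam * ((∑ x, u x * p x) - u y) := by
        rw [← hshift v, ← hshift u, Finset.mul_sum]
        apply Finset.sum_le_sum
        intro x _
        rw [← mul_assoc]
        exact mul_le_mul_of_nonneg_right (hpt x) (hp01 x).1
      constructor
      · intro hu
        have : lam * ((∑ x, u x * p x) - u y) ≤ 0 :=
          mul_nonpos_of_nonneg_of_nonpos hlampos.le (by linarith)
        linarith
      · intro hu
        have : lam * ((∑ x, u x * p x) - u y) < 0 :=
          mul_neg_of_pos_of_neg hlampos (by linarith)
        linarith
    · -- Case C : all x, u y ≤ u x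
      have hWle : ∀ x, u y ≤ u x := fun x => le_of_not_gt
        (fun hc => hW ⟨x, Finset.mem_filter.mpr ⟨Finset.mem_univ x, hc⟩⟩)
      have hge : u y ≤ ∑ x, u x * p x := by
        calc u y = ∑ x, u y * p x := by rw [← Finset.mul_sum, hpsum, mul_one]
        _ ≤ ∑ x, u x * p x :=
          Finset.sum_le_sum (fun x _ => mul_le_mul_of_nonneg_right (hWle x) (hp01 x).1)
      constructor
      · intro hu
        have heq : ∑ x, u y * p x = ∑ x, u x * p x := by
          rw [← Finset.mul_sum, hpsum, mul_one]; linarith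
        have hall := (Finset.sum_eq_sum_iff_of_le
          (fun x _ => mul_le_mul_of_nonneg_right (hWle x) (hp01 x).1)).mp heq
        have : ∑ x, v x * p x = v y := by
          rw [show v y = ∑ x, v y * p x by rw [← Finset.mul_sum, hpsum, mul_one]]
          apply Finset.sum_congr rfl
          intro x _
          rcases eq_or_lt_of_le (hp01 x).1 with hp0 | hp0
          · rw [← hp0]; ring
          · have hux : u x = u y := by
              have := hall x (Finset.mem_univ x)
              exact mul_right_cancel₀ (ne_of_gt hp0) this.symm
            have hv1 : v x ≥ v y := (h1 x y).1 (le_of_eq hux.symm)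
            have hv2 : v y ≥ v x := (h1 y x).1 (le_of_eq hux)
            rw [le_antisymm hv1 hv2]
        linarith
      · intro hu
        linarith
  · -- Case B : all x, u x ≤ u y
    have hZle : ∀ x, u x ≤ u y := fun x => le_of_not_gt
      (fun hc => hZ ⟨x, Finset.mem_filter.mpr ⟨Finset.mem_univ x, hc⟩⟩)
    have hvy : ∑ x, v y * p x = v y := by rw [← Finset.mul_sum, hpsum, mul_one]
    constructor
    · intro _
      have : ∑ x, v x * p x ≤ ∑ x, v y * p x :=
        Finset.sum_le_sum (fun x _ =>
          mul_le_mul_of_nonneg_right ((h1 y x).1 (hZle x)) (hp01 x).1)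
      linarith
    · intro hu
      have hex : ∃ x0, 0 < p x0 ∧ u x0 < u y := by
        by_contra hc
        push_neg at hc
        have : ∑ x, u x * p x = u y := by
          rw [show u y = ∑ x, u y * p x by rw [← Finset.mul_sum, hpsum, mul_one]]
          apply Finset.sum_congr rfl
          intro x _
          rcases eq_or_lt_of_le (hp01 x).1 with hp0 | hp0
          · rw [← hp0]; ring
          · rw [le_antisymm (hZle x) (hc x hp0)]
        linarith
      obtain ⟨x0, hx0p, hx0u⟩ := hex
      have : ∑ x, v x * p x < ∑ x, v y * p x := by
        apply Finset.sum_lt_sum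
        · intro x _
          exact mul_le_mul_of_nonneg_right ((h1 y x).1 (hZle x)) (hp01 x).1
        · exact ⟨x0, Finset.mem_univ x0,
            mul_lt_mul_of_pos_right ((h1 y x0).2 hx0u) hx0p⟩
      linarith

private theorem stmt_6_fwd {X : Type*} [Fintype X] (u v : X → ℝ) (h : LessRiskAverse u v) :
    ((∀ x y : X, (u x ≥ u y → v x ≥ v y) ∧ (u x > u y → v x > v y)) ∧
      (∀ x y z : X, u x < u y → u y < u z →
        (u z - u y) / (u y - u x) ≥ (v z - v y) / (v y - v x))) := by
  classical
  have hI : ∀ x y : X, (u x ≥ u y → v x ≥ v y) ∧ (u x > u y → v x > v y) := by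
    intro x y
    set p : X → ℝ := fun w => if w = y then 1 else 0 with hpdef
    have hlot : IsLottery p := by
      constructor
      · intro w
        by_cases hw : w = y <;> simp [hpdef, hw]
      · simp [hpdef]
    have hsum : ∀ w : X → ℝ, ∑ z, w z * p z = w y := by
      intro w
      simp [hpdef, mul_ite]
    have := h x p hlot
    rw [hsum u, hsum v] at this
    exact this
  refine ⟨hI, ?_⟩
  intro x y z hxy hyz
  have hxz : u x < u z := lt_trans hxy hyz
  have hxzne : x ≠ z := fun hc => by rw [hc] at hxz; exact lt_irrefl _ hxz
  set α : ℝ := (u y - u x) / (u z - u x) with hαdef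
  have hα0 : 0 < α := div_pos (by linarith) (by linarith)
  have hα1 : α < 1 := (div_lt_one (by linarith)).mpr (by linarith)
  set p : X → ℝ := fun w => α * (if w = z then 1 else 0) + (1 - α) * (if w = x then 1 else 0)
    with hpdef
  have hzx : z ≠ x := Ne.symm hxzne
  have hpval : ∀ w, p w = if w = z then α else if w = x then 1 - α else 0 := by
    intro w
    by_cases hwz : w = z
    · subst hwz; simp [hpdef, hzx]
    · by_cases hwx : w = x
      · subst hwx; simp [hpdef, hxzne]
      · simp [hpdef, hwz, hwx]
  have hlot : IsLottery p := by
    constructor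
    · intro w
      rw [hpval w]
      by_cases hwz : w = z
      · simp [hwz]; constructor <;> linarith
      · by_cases hwx : w = x
        · simp [hwz, hwx, hxzne]; constructor <;> linarith
        · simp [hwz, hwx]
    · have : ∀ w, p w = α * (if w = z then 1 else 0) + (1 - α) * (if w = x then 1 else 0) := by
        intro w; rw [hpdef]
      rw [Finset.sum_congr rfl (fun w _ => this w), Finset.sum_add_distrib,
        ← Finset.mul_sum, ← Finset.mul_sum]
      simp
  have hsum : ∀ w : X → ℝ, ∑ a, w a * p a = α * w z + (1 - α) * w x := by
    intro w
    have step : ∀ a, w a * p a =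
        (α * w z) * (if a = z then 1 else 0) + ((1 - α) * w x) * (if a = x then 1 else 0) := by
      intro a
      rw [hpval a]
      by_cases haz : a = z
      · subst haz; simp [hzx]; ring
      · by_cases hax : a = x
        · subst hax; simp [haz]; ring
        · simp [haz, hax]
    rw [Finset.sum_congr rfl (fun a _ => step a), Finset.sum_add_distrib,
      ← Finset.mul_sum, ← Finset.mul_sum]
    simp [mul_ite]
  have hαm : α * (u z - u x) = u y - u x := div_mul_cancel₀ _ (by intro hc; nlinarith [hc] : u z - u x ≠ 0)
  have huy : u y = ∑ a, u a * p a := by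
    rw [hsum u]; nlinarith
  have hv : v y ≥ ∑ a, v a * p a := (h y p hlot).1 (le_of_eq huy.symm)
  rw [hsum v] at hv
  have hvyx : v x < v y := (hI y x).2 hxy
  have hvzy : v y < v z := (hI z y).2 hyz
  rw [ge_iff_le, div_le_div_iff₀ (by linarith) (by linarith)]
  have h5 : (α * v z + (1 - α) * v x) * (u z - u x) ≤ v y * (u z - u x) :=
    mul_le_mul_of_nonneg_right hv (by linarith)
  nlinarith [h5, hαm]


theorem stmt_6 {X : Type*} [Fintype X] [Nonempty X] (u v : X → ℝ) :
    LessRiskAverse u v ↔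
      ((∀ x y : X, (u x ≥ u y → v x ≥ v y) ∧ (u x > u y → v x > v y)) ∧
        (∀ x y z : X, u x < u y → u y < u z →
          (u z - u y) / (u y - u x) ≥ (v z - v y) / (v y - v x))) := by
  constructor
  · exact fun h => stmt_6_fwd u v h
  · exact fun ⟨h1, h2⟩ => stmt_6_rev u v h1 h2
end

section
/- Let X be a nonempty finite set and u, v : X → ℝ. Then u is less risk-averse than v if and only if there exists a convex, monotone increasing function φ from the convex hull of v(X) (a subset of ℝ) to ℝ which is strictly increasing on the image v(X) and satisfies u(x) = φ(v(x)) for every x ∈ X. -/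
open Finset

section RAaux
variable {X : Type*} [Fintype X] (u v : X → ℝ)

/-- A subgradient slope at the data point `(v x, u x)`. -/
noncomputable def mslope (x : X) : ℝ :=
  if h : (Finset.univ.filter fun z => v z < v x).Nonempty then
    (Finset.univ.filter fun z => v z < v x).sup' h (fun z => (u x - u z) / (v x - v z))
  else if h' : (Finset.univ.filter fun z => v x < v z).Nonempty then
    (Finset.univ.filter fun z => v x < v z).inf' h' (fun z => (u z - u x) / (v z - v x))
  else 0

/-- Max of supporting lines. -/
noncomputable def phiOf [Nonempty X] (t : ℝ) : ℝ :=
  Finset.univ.sup' Finset.univ_nonempty (fun x => u x + mslope u v x * (t - v x))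

lemma mslope_nonneg (hs : ∀ a b : X, v a < v b → u a < u b) (x : X) :
    0 ≤ mslope u v x := by
  unfold mslope
  split_ifs with h h'
  · obtain ⟨z, hz⟩ := h
    have hzx : v z < v x := (Finset.mem_filter.mp hz).2
    refine le_trans ?_ (Finset.le_sup' _ hz)
    exact div_nonneg (by linarith [hs z x hzx]) (by linarith)
  · refine Finset.le_inf' h' _ fun z hz => ?_
    have hzx : v x < v z := (Finset.mem_filter.mp hz).2
    exact div_nonneg (by linarith [hs x z hzx]) (by linarith)
  · exact le_refl 0

lemma mslope_support (hm : ∀ a b : X, v a ≤ v b → u a ≤ u b)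
    (hc : ∀ z x y : X, v z < v x → v x < v y →
      (u x - u z) * (v y - v x) ≤ (u y - u x) * (v x - v z))
    (x y : X) : u x + mslope u v x * (v y - v x) ≤ u y := by
  rcases lt_trichotomy (v y) (v x) with hlt | heq | hgt
  · have hM : (u x - u y) / (v x - v y) ≤ mslope u v x := by
      unfold mslope
      rw [dif_pos ⟨y, Finset.mem_filter.mpr ⟨Finset.mem_univ _, hlt⟩⟩]
      exact Finset.le_sup' (fun z => (u x - u z) / (v x - v z)) (Finset.mem_filter.mpr ⟨Finset.mem_univ y, hlt⟩)
    have hd : 0 < v x - v y := by linarith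
    have hq : (u x - u y) / (v x - v y) * (v x - v y) = u x - u y :=
      div_mul_cancel₀ _ (ne_of_gt hd)
    nlinarith [mul_le_mul_of_nonneg_right hM hd.le]
  · have h1 : u y ≤ u x := hm y x heq.le
    have h2 : u x ≤ u y := hm x y heq.ge
    rw [heq]
    simp
    linarith
  · have hd : 0 < v y - v x := by linarith
    have hM : mslope u v x ≤ (u y - u x) / (v y - v x) := by
      unfold mslope
      split_ifs with h h'
      · refine Finset.sup'_le _ _ fun z hz => ?_
        have hzx : v z < v x := (Finset.mem_filter.mp hz).2
        rw [div_le_div_iff₀ (by linarith) hd]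
        exact hc z x y hzx hgt
      · exact Finset.inf'_le (fun z => (u z - u x) / (v z - v x)) (Finset.mem_filter.mpr ⟨Finset.mem_univ y, hgt⟩)
      · exact absurd ⟨y, Finset.mem_filter.mpr ⟨Finset.mem_univ _, hgt⟩⟩ h'
    have hq : (u y - u x) / (v y - v x) * (v y - v x) = u y - u x :=
      div_mul_cancel₀ _ (ne_of_gt hd)
    nlinarith [mul_le_mul_of_nonneg_right hM hd.le]

lemma phiOf_eq [Nonempty X] (hm : ∀ a b : X, v a ≤ v b → u a ≤ u b)
    (hc : ∀ z x y : X, v z < v x → v x < v y →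
      (u x - u z) * (v y - v x) ≤ (u y - u x) * (v x - v z))
    (x : X) : phiOf u v (v x) = u x := by
  apply le_antisymm
  · exact Finset.sup'_le _ _ fun z _ => mslope_support u v hm hc z x
  · have h := Finset.le_sup' (fun z => u z + mslope u v z * (v x - v z)) (Finset.mem_univ x)
    simpa only [phiOf, sub_self, mul_zero, add_zero] using h

end RAaux

theorem stmt_7 {X : Type*} [Fintype X] [Nonempty X] (u v : X → ℝ) :
    LessRiskAverse u v ↔
      ∃ φ : ℝ → ℝ,
        ConvexOn ℝ (convexHull ℝ (Set.range v)) φ ∧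
        MonotoneOn φ (convexHull ℝ (Set.range v)) ∧
        StrictMonoOn φ (Set.range v) ∧
        ∀ x : X, u x = φ (v x) := by
  classical
  constructor
  · intro h
    have hdirac : ∀ z : X, IsLottery (fun w => if w = z then (1:ℝ) else 0) := by
      intro z
      constructor
      · intro w; by_cases hw : w = z <;> simp [hw]
      · simp
    have hdsum : ∀ (f : X → ℝ) (z : X),
        ∑ x, f x * (if x = z then (1:ℝ) else 0) = f z := by
      intro f z
      simp [mul_ite]
    have hm : ∀ a b : X, v a ≤ v b → u a ≤ u b := by
      intro a b hab
      by_contra hua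
      push_neg at hua
      have h2 := (h a _ (hdirac b)).2
      rw [hdsum u b, hdsum v b] at h2
      exact absurd (h2 hua) (not_lt.mpr hab)
    have hs : ∀ a b : X, v a < v b → u a < u b := by
      intro a b hab
      by_contra hua
      push_neg at hua
      have h1 := (h a _ (hdirac b)).1
      rw [hdsum u b, hdsum v b] at h1
      exact absurd (h1 hua) (not_le.mpr hab)
    have hc : ∀ z x y : X, v z < v x → v x < v y →
        (u x - u z) * (v y - v x) ≤ (u y - u x) * (v x - v z) := by
      intro z x y h1 h2
      have hD : (0:ℝ) < v y - v z := by linarith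
      have hD' : v y - v z ≠ 0 := ne_of_gt hD
      set lam : ℝ := (v y - v x) / (v y - v z) with hlam
      set p : X → ℝ := fun w => (if w = z then lam else 0) + (if w = y then 1 - lam else 0)
        with hp
      have hlam0 : 0 ≤ lam := div_nonneg (by linarith) hD.le
      have hlam1 : lam ≤ 1 := by
        rw [hlam, div_le_one hD]; linarith
      have hlp : IsLottery p := by
        constructor
        · intro w
          simp only [hp]
          split_ifs <;> constructor <;> linarith
        · simp only [hp]
          rw [Finset.sum_add_distrib]
          simp [Finset.sum_ite_eq']
      have hsv : ∑ w, v w * p w = lam * v z + (1 - lam) * v y := by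
        simp only [hp, mul_add, mul_ite, mul_zero, Finset.sum_add_distrib,
          Finset.sum_ite_eq', Finset.mem_univ, if_true]
        ring
      have hsu : ∑ w, u w * p w = lam * u z + (1 - lam) * u y := by
        simp only [hp, mul_add, mul_ite, mul_zero, Finset.sum_add_distrib,
          Finset.sum_ite_eq', Finset.mem_univ, if_true]
        ring
      have hvx : v x = ∑ w, v w * p w := by
        rw [hsv, hlam]
        field_simp
        ring
      have hkey := (h x p hlp).2
      have hux : ¬ u x > ∑ w, u w * p w := by
        intro hgt
        have := hkey hgt
        rw [← hvx] at this
        exact lt_irrefl _ this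
      push_neg at hux
      rw [hsu] at hux
      have hmul := mul_le_mul_of_nonneg_right hux hD.le
      have h2' : (lam * u z + (1 - lam) * u y) * (v y - v z)
          = (v y - v x) * u z + (v x - v z) * u y := by
        rw [hlam]
        field_simp
        ring
      rw [h2'] at hmul
      nlinarith [hmul]
    have hln : ∀ (x : X) (t : ℝ), u x + mslope u v x * (t - v x) ≤ phiOf u v t :=
      fun x t => Finset.le_sup' (fun x => u x + mslope u v x * (t - v x)) (Finset.mem_univ x)
    refine ⟨phiOf u v, ⟨convex_convexHull ℝ _, ?_⟩, ?_, ?_, fun x => (phiOf_eq u v hm hc x).symm⟩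
    · intro a _ b _ wa wb hwa hwb hw
      obtain ⟨x, -, hxe⟩ := Finset.exists_mem_eq_sup' Finset.univ_nonempty
        (fun x => u x + mslope u v x * (wa • a + wb • b - v x))
      have h1 : phiOf u v (wa • a + wb • b) = u x + mslope u v x * (wa • a + wb • b - v x) := hxe
      rw [h1]
      have h2 : u x + mslope u v x * (wa • a + wb • b - v x)
          = wa * (u x + mslope u v x * (a - v x)) + wb * (u x + mslope u v x * (b - v x)) := by
        simp only [smul_eq_mul]
        linear_combination (mslope u v x * v x - u x) * hw
      rw [h2]
      simp only [smul_eq_mul]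
      exact add_le_add (mul_le_mul_of_nonneg_left (hln x a) hwa)
        (mul_le_mul_of_nonneg_left (hln x b) hwb)
    · intro a _ b _ hab
      refine Finset.sup'_le _ _ fun x _ => le_trans ?_ (hln x b)
      have h0 := mslope_nonneg u v hs x
      have := mul_le_mul_of_nonneg_left (show a - v x ≤ b - v x by linarith) h0
      linarith
    · intro a ha b hb hab
      obtain ⟨xa, rfl⟩ := ha
      obtain ⟨xb, rfl⟩ := hb
      rw [phiOf_eq u v hm hc, phiOf_eq u v hm hc]
      exact hs xa xb hab
  · rintro ⟨φ, hconv, hmono, hstrict, hval⟩ y p hp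
    have hp0 : ∀ x, 0 ≤ p x := fun x => (hp.1 x).1
    have hmem : ∀ x : X, v x ∈ convexHull ℝ (Set.range v) :=
      fun x => subset_convexHull ℝ _ ⟨x, rfl⟩
    have htmem : (∑ x, v x * p x) ∈ convexHull ℝ (Set.range v) := by
      have h := (convex_convexHull ℝ (Set.range v)).sum_mem (t := Finset.univ)
        (fun i _ => hp0 i) hp.2 (fun i _ => hmem i)
      have he : ∑ i, p i • v i = ∑ x, v x * p x :=
        Finset.sum_congr rfl fun x _ => by rw [smul_eq_mul, mul_comm]
      rwa [he] at h
    have hJ : φ (∑ x, v x * p x) ≤ ∑ x, u x * p x := by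
      have h := hconv.map_sum_le (t := Finset.univ) (fun i _ => hp0 i) hp.2 (fun i _ => hmem i)
      have he : ∑ i, p i • v i = ∑ x, v x * p x :=
        Finset.sum_congr rfl fun x _ => by rw [smul_eq_mul, mul_comm]
      have he2 : ∑ i, p i • φ (v i) = ∑ x, u x * p x :=
        Finset.sum_congr rfl fun x _ => by rw [smul_eq_mul, ← hval x, mul_comm]
      rwa [he, he2] at h
    constructor
    · intro hu
      by_contra hvy
      push_neg at hvy
      set t := ∑ x, v x * p x with ht
      have h1 : φ (v y) ≤ φ t := hmono (hmem y) htmem hvy.le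
      have hA : u y ≤ ∑ x, u x * p x := by
        rw [hval y]
        exact le_trans h1 hJ
      have heqsum : ∑ x, u x * p x = u y := le_antisymm hu hA
      have hphit : φ t = u y := by
        refine le_antisymm (le_trans hJ hu) ?_
        rw [hval y]
        exact h1
      have hx0 : ∃ x0, 0 < p x0 ∧ v y < v x0 := by
        by_contra hcon
        push_neg at hcon
        have hle : t ≤ v y := by
          calc t = ∑ x, v x * p x := ht
            _ ≤ ∑ x, v y * p x := by
                refine Finset.sum_le_sum fun x _ => ?_
                rcases (hp0 x).lt_or_eq with h0 | h0
                · exact mul_le_mul_of_nonneg_right (hcon x h0) (hp0 x)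
                · rw [← h0]; simp
            _ = v y := by rw [← Finset.mul_sum, hp.2, mul_one]
        linarith
      obtain ⟨x0, hpx0, hvx0⟩ := hx0
      have hsum0 : ∑ x, (u x - u y) * p x = 0 := by
        have he : ∀ x ∈ Finset.univ, (u x - u y) * p x = u x * p x - u y * p x :=
          fun x _ => by ring
        rw [Finset.sum_congr rfl he, Finset.sum_sub_distrib, ← Finset.mul_sum, hp.2,
          mul_one, heqsum, sub_self]
      have huy0 : u y < u x0 := by
        have h := hstrict ⟨y, rfl⟩ ⟨x0, rfl⟩ hvx0
        rwa [← hval y, ← hval x0] at h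
      have hterm : 0 < (u x0 - u y) * p x0 := mul_pos (by linarith) hpx0
      have hx1 : ∃ x1, (u x1 - u y) * p x1 < 0 := by
        by_contra hcon
        push_neg at hcon
        have : 0 < ∑ x, (u x - u y) * p x :=
          Finset.sum_pos' (fun x _ => hcon x) ⟨x0, Finset.mem_univ x0, hterm⟩
        linarith
      obtain ⟨x1, hx1⟩ := hx1
      have hux1 : u x1 < u y := by nlinarith [hp0 x1]
      have hvx1 : v x1 < v y := by
        by_contra hcon
        push_neg at hcon
        have h := hmono (hmem y) (hmem x1) hcon
        rw [← hval y, ← hval x1] at h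
        linarith
      have hdt : 0 < t - v x1 := by linarith
      set lam : ℝ := (t - v y) / (t - v x1) with hlam
      have hl0 : 0 < lam := div_pos (by linarith) hdt
      have hl1 : lam < 1 := by rw [hlam, div_lt_one hdt]; linarith
      have hcv := hconv.2 (hmem x1) htmem hl0.le (by linarith : (0:ℝ) ≤ 1 - lam) (by ring)
      have hcomb : lam • v x1 + (1 - lam) • t = v y := by
        have hne : t - v x1 ≠ 0 := ne_of_gt hdt
        simp only [smul_eq_mul, hlam]
        field_simp
        ring
      rw [hcomb] at hcv
      simp only [smul_eq_mul] at hcv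
      rw [← hval y, ← hval x1, hphit] at hcv
      nlinarith [mul_lt_mul_of_pos_left hux1 hl0]
    · intro hu
      by_contra hvy
      push_neg at hvy
      have h1 : φ (v y) ≤ φ (∑ x, v x * p x) := hmono (hmem y) htmem hvy
      rw [← hval y] at h1
      linarith [hJ]
end

section
/- Let X be a nonempty finite set and u, v : X → ℝ. Suppose there exists a convex, monotone increasing function φ from the convex hull of v(X) to ℝ which is strictly increasing on v(X) and satisfies u(x) = φ(v(x)) for every x ∈ X. Then: (I) for any x, y ∈ X, u(x) ≥ u(y) implies v(x) ≥ v(y), and u(x) > u(y) implies v(x) > v(y); and (II) for any x, y, z ∈ X with u(x) < u(y) < u(z), (u(z) − u(y))/(u(y) − u(x)) ≥ (v(z) − v(y))/(v(y) − v(x)). -/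
open Finset

theorem stmt_8 {X : Type*} [Fintype X] [Nonempty X] (u v : X → ℝ)
    (φ : ℝ → ℝ)
    (hconv : ConvexOn ℝ (convexHull ℝ (Set.range v)) φ)
    (hmono : MonotoneOn φ (convexHull ℝ (Set.range v)))
    (hstrict : StrictMonoOn φ (Set.range v))
    (hcomp : ∀ x : X, u x = φ (v x)) :
    (∀ x y : X, (u x ≥ u y → v x ≥ v y) ∧ (u x > u y → v x > v y)) ∧
      (∀ x y z : X, u x < u y → u y < u z →
        (u z - u y) / (u y - u x) ≥ (v z - v y) / (v y - v x)) := by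
  have hmem : ∀ x : X, v x ∈ convexHull ℝ (Set.range v) := fun x =>
    subset_convexHull ℝ _ (Set.mem_range_self x)
  have part1 : ∀ x y : X, (u x ≥ u y → v x ≥ v y) ∧ (u x > u y → v x > v y) := by
    intro x y
    constructor
    · intro h
      by_contra hc
      push_neg at hc
      have := hstrict (Set.mem_range_self x) (Set.mem_range_self y) hc
      rw [← hcomp x, ← hcomp y] at this
      linarith
    · intro h
      by_contra hc
      push_neg at hc
      have := hmono (hmem x) (hmem y) hc
      rw [← hcomp x, ← hcomp y] at this
      linarith
  refine ⟨part1, ?_⟩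
  intro x y z hxy hyz
  have hvxy : v x < v y := (part1 y x).2 hxy
  have hvyz : v y < v z := (part1 z y).2 hyz
  have hslope := hconv.slope_mono_adjacent (hmem x) (hmem z) hvxy hvyz
  rw [← hcomp x, ← hcomp y, ← hcomp z] at hslope
  rw [ge_iff_le, div_le_div_iff₀ (by linarith) (by linarith)]
  rw [div_le_div_iff₀ (by linarith) (by linarith)] at hslope
  nlinarith
end

section
/- Let (Θ, ≲) be a nonempty partially ordered set, X a nonempty finite set, and f : X × Θ → ℝ. Then the following are equivalent: (A) for each lottery p ∈ Δ(X), the map θ ↦ ∑_{x∈X} f(x,θ)·p(x) is single-crossing; (B) both of the following hold: (I) for each x ∈ X, the function f(x,·) is single-crossing, and (II) the family {f(x,·) : x ∈ X} satisfies signed-ratio monotonicity. -/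
open Finset

theorem stmt_9 {Θ X : Type*} [PartialOrder Θ] [Nonempty Θ] [Fintype X] [Nonempty X]
    (f : X × Θ → ℝ) :
    (∀ p : X → ℝ, IsLottery p →
        SingleCrossing (fun θ => ∑ x, f (x, θ) * p x)) ↔
      ((∀ x : X, SingleCrossing (fun θ => f (x, θ))) ∧
        SignedRatioMonotone {φ : Θ → ℝ | ∃ x : X, φ = fun θ => f (x, θ)}) := by
  classical
  constructor
  · intro h
    constructor
    · -- Dirac lotteries
      intro x
      have hl : IsLottery (fun y => if y = x then (1:ℝ) else 0) := by
        constructor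
        · intro y; by_cases hy : y = x <;> simp [hy]
        · simp
      have := h _ hl
      have hsum : ∀ θ : Θ, ∑ y, f (y, θ) * (if y = x then (1:ℝ) else 0) = f (x, θ) := by
        intro θ; simp [mul_ite]
      intro θ θ' hθ
      have h2 := this hθ
      simp only [hsum] at h2
      exact h2
    · rintro φ ⟨x₀, rfl⟩ ψ ⟨x₁, rfl⟩ θ θ' hθ hφ hψ
      simp only at hφ hψ ⊢
      have hne : x₀ ≠ x₁ := by
        intro hEq; rw [hEq] at hφ; linarith
      set D : ℝ := f (x₁, θ) - f (x₀, θ) with hD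
      have hDpos : 0 < D := by simp [hD]; linarith
      set lam : ℝ := f (x₁, θ) / D with hlam
      have hlam0 : 0 ≤ lam := le_of_lt (div_pos hψ hDpos)
      have hlam1 : lam ≤ 1 := by
        rw [hlam, div_le_one hDpos]; simp [hD]; linarith
      set p : X → ℝ := fun y => if y = x₀ then lam else if y = x₁ then 1 - lam else 0 with hp
      have hl : IsLottery p := by
        constructor
        · intro y
          by_cases h0 : y = x₀
          · simp [hp, h0, hlam0, hlam1]
          · by_cases h1 : y = x₁ <;> simp [hp, h0, h1, Ne.symm hne] <;> constructor <;> linarith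
        · have : ∑ y, p y = ∑ y ∈ ({x₀, x₁} : Finset X), p y := by
            refine (Finset.sum_subset (Finset.subset_univ _) ?_).symm
            intro y _ hy
            simp only [Finset.mem_insert, Finset.mem_singleton, not_or] at hy
            simp [hp, hy.1, hy.2]
          rw [this, Finset.sum_pair hne]
          simp [hp, hne, (Ne.symm hne)]
      have hsum : ∀ σ : Θ, ∑ y, f (y, σ) * p y = lam * f (x₀, σ) + (1 - lam) * f (x₁, σ) := by
        intro σ
        have : ∑ y, f (y, σ) * p y = ∑ y ∈ ({x₀, x₁} : Finset X), f (y, σ) * p y := by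
          refine (Finset.sum_subset (Finset.subset_univ _) ?_).symm
          intro y _ hy
          simp only [Finset.mem_insert, Finset.mem_singleton, not_or] at hy
          simp [hp, hy.1, hy.2]
        rw [this, Finset.sum_pair hne]
        simp [hp, hne, (Ne.symm hne)]
        ring
      have h0 : lam * f (x₀, θ) + (1 - lam) * f (x₁, θ) = 0 := by
        rw [hlam]; field_simp; ring
      have key := (h p hl hθ).1
      simp only [hsum] at key
      have key2 : lam * f (x₀, θ') + (1 - lam) * f (x₁, θ') ≥ 0 := key (by rw [h0])
      have hlam' : lam = f (x₁, θ) / D := hlam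
      have h1lam : 1 - lam = -f (x₀, θ) / D := by
        rw [hlam]; field_simp; simp [hD]
      rw [hlam', h1lam] at key2
      have hD0 : D ≠ 0 := ne_of_gt hDpos
      have h3 : 0 ≤ (f (x₁, θ) / D * f (x₀, θ') + -f (x₀, θ) / D * f (x₁, θ')) * D :=
        mul_nonneg key2 hDpos.le
      have h4 : (f (x₁, θ) / D * f (x₀, θ') + -f (x₀, θ) / D * f (x₁, θ')) * D
          = f (x₁, θ) * f (x₀, θ') + -f (x₀, θ) * f (x₁, θ') := by
        field_simp
      rw [h4] at h3
      linarith
  · rintro ⟨hsc, hsrm⟩ p hp θ θ' hθ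
    simp only
    have hpnn : ∀ x, 0 ≤ p x := fun x => (hp.1 x).1
    by_cases hT : ∃ x : X, 0 < f (x, θ)
    · -- pivot argument
      obtain ⟨xp, hxp, hmin⟩ := Finset.exists_min_image (Finset.univ.filter fun x => 0 < f (x, θ))
        (fun x => f (x, θ') / f (x, θ)) (by
          obtain ⟨x, hx⟩ := hT
          exact ⟨x, by simp [hx]⟩)
      have hap : 0 < f (xp, θ) := by simpa using (Finset.mem_filter.mp hxp).2
      have hbp : 0 < f (xp, θ') := (hsc xp hθ).2 hap
      set c : ℝ := f (xp, θ') / f (xp, θ) with hc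
      have hcpos : 0 < c := div_pos hbp hap
      have hpt : ∀ x, c * f (x, θ) ≤ f (x, θ') := by
        intro x
        rcases lt_trichotomy (f (x, θ)) 0 with hneg | hzero | hpos
        · have := hsrm (fun σ => f (x, σ)) ⟨x, rfl⟩ (fun σ => f (xp, σ)) ⟨xp, rfl⟩ hθ hneg hap
          simp only [ge_iff_le] at this
          -- this : -f (x, θ') * f (xp, θ) ≤ -f (x, θ) * f (xp, θ')
          rw [hc, div_mul_eq_mul_div, div_le_iff₀ hap]
          nlinarith
        · rw [hzero, mul_zero]
          exact (hsc x hθ).1 (le_of_eq hzero.symm)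
        · have hmem : x ∈ Finset.univ.filter fun x => 0 < f (x, θ) := by simp [hpos]
          have := hmin x hmem
          rw [hc] at *
          calc f (xp, θ') / f (xp, θ) * f (x, θ) ≤ f (x, θ') / f (x, θ) * f (x, θ) :=
                mul_le_mul_of_nonneg_right this (le_of_lt hpos)
            _ = f (x, θ') := by field_simp
      have hsum : c * ∑ x, f (x, θ) * p x ≤ ∑ x, f (x, θ') * p x := by
        rw [Finset.mul_sum]
        refine Finset.sum_le_sum fun x _ => ?_
        rw [← mul_assoc]
        exact mul_le_mul_of_nonneg_right (hpt x) (hpnn x)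
      constructor
      · intro hS
        have : 0 ≤ c * ∑ x, f (x, θ) * p x := mul_nonneg hcpos.le hS
        linarith
      · intro hS
        have : 0 < c * ∑ x, f (x, θ) * p x := mul_pos hcpos hS
        linarith
    · push_neg at hT
      have hterm : ∀ x ∈ Finset.univ, f (x, θ) * p x ≤ 0 :=
        fun x _ => mul_nonpos_of_nonpos_of_nonneg (hT x) (hpnn x)
      have hSle : ∑ x, f (x, θ) * p x ≤ 0 := Finset.sum_nonpos hterm
      constructor
      · intro hS
        have hsum0 : ∑ x, f (x, θ) * p x = 0 := le_antisymm hSle hS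
        have hzero : ∀ x ∈ Finset.univ, f (x, θ) * p x = 0 :=
          (Finset.sum_eq_zero_iff_of_nonpos hterm).mp hsum0
        refine Finset.sum_nonneg fun x _ => ?_
        rcases eq_or_lt_of_le (hpnn x) with hp0 | hp0
        · rw [← hp0, mul_zero]
        · have : f (x, θ) = 0 := by
            have := hzero x (Finset.mem_univ x)
            exact (mul_eq_zero.mp this).resolve_right (ne_of_gt hp0)
          exact mul_nonneg ((hsc x hθ).1 (le_of_eq this.symm)) (hpnn x)
      · intro hS; linarith
end

section
/- Let (Θ, ≲) be a nonempty partially ordered set, X a nonempty finite set, and f : X × Θ → ℝ. Suppose that for each x ∈ X the function f(x,·) is single-crossing, and that the family {f(x,·) : x ∈ X} satisfies signed-ratio monotonicity. Then for every lottery p ∈ Δ(X), the map θ ↦ ∑_{x∈X} f(x,θ)·p(x) is single-crossing. -/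
open Finset

theorem stmt_10 {Θ X : Type*} [PartialOrder Θ] [Nonempty Θ] [Fintype X] [Nonempty X]
    (f : X × Θ → ℝ)
    (hsc : ∀ x : X, SingleCrossing (fun θ => f (x, θ)))
    (hsrm : SignedRatioMonotone {φ : Θ → ℝ | ∃ x : X, φ = fun θ => f (x, θ)}) :
    ∀ p : X → ℝ, IsLottery p →
      SingleCrossing (fun θ => ∑ x, f (x, θ) * p x) := by
  intro p hp
  have hpx : ∀ x, 0 ≤ p x := fun x => (hp.1 x).1
  intro θ θ' hθ
  have main : (0:ℝ) ≤ ∑ x, f (x, θ) * p x →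
      ((0:ℝ) ≤ ∑ x, f (x, θ') * p x ∧
       ((0:ℝ) < ∑ x, f (x, θ) * p x → (0:ℝ) < ∑ x, f (x, θ') * p x)) := by
    intro hS
    by_cases hN : ∀ x, 0 < p x → 0 ≤ f (x, θ)
    · -- no negative terms
      have hterm : ∀ x, 0 ≤ f (x, θ') * p x := by
        intro x
        rcases eq_or_lt_of_le (hpx x) with hx | hx
        · rw [← hx]; simp
        · exact mul_nonneg ((hsc x hθ).1 (hN x hx)) (hpx x)
      refine ⟨Finset.sum_nonneg fun x _ => hterm x, ?_⟩
      intro hS'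
      have hex : ∃ x ∈ (Finset.univ : Finset X), 0 < f (x, θ) * p x := by
        by_contra hcon
        push_neg at hcon
        have : ∑ x, f (x, θ) * p x ≤ 0 := Finset.sum_nonpos fun x hx => hcon x hx
        linarith
      obtain ⟨x, -, hx⟩ := hex
      have hpx0 : 0 < p x := by
        rcases eq_or_lt_of_le (hpx x) with h | h
        · exfalso; rw [← h] at hx; simp at hx
        · exact h
      have hfx : 0 < f (x, θ) := by
        by_contra h
        push_neg at h
        nlinarith
      exact Finset.sum_pos' (fun i _ => hterm i)
        ⟨x, Finset.mem_univ x, mul_pos ((hsc x hθ).2 hfx) hpx0⟩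
    · -- some negative term
      push_neg at hN
      obtain ⟨x₀, hx₀p, hx₀f⟩ := hN
      -- P nonempty
      have hPex : ∃ y, 0 < f (y, θ) ∧ 0 < p y := by
        by_contra hcon
        push_neg at hcon
        have hle : ∀ i ∈ (Finset.univ : Finset X), f (i, θ) * p i ≤ 0 := by
          intro i _
          rcases eq_or_lt_of_le (hpx i) with h | h
          · rw [← h]; simp
          · rcases le_or_gt (f (i, θ)) 0 with hf | hf
            · nlinarith
            · nlinarith [hcon i hf]
        have hlt : ∑ x, f (x, θ) * p x < ∑ _x : X, (0:ℝ) :=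
          Finset.sum_lt_sum hle ⟨x₀, Finset.mem_univ x₀, by nlinarith⟩
        simp at hlt
        linarith
      obtain ⟨y₀, hy₀f, hy₀p⟩ := hPex
      set P : Finset X := Finset.univ.filter (fun x => 0 < f (x, θ) ∧ 0 < p x) with hP
      have hPne : P.Nonempty := ⟨y₀, by simp [hP, hy₀f, hy₀p]⟩
      obtain ⟨y, hyP, hymin⟩ :=
        Finset.exists_min_image P (fun x => f (x, θ') / f (x, θ)) hPne
      rw [hP, Finset.mem_filter] at hyP
      obtain ⟨-, hy1, hy2⟩ := hyP
      have hy1' : 0 < f (y, θ') := (hsc y hθ).2 hy1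
      set r : ℝ := f (y, θ') / f (y, θ) with hrdef
      have hr : 0 < r := div_pos hy1' hy1
      have hrc : r * f (y, θ) = f (y, θ') := div_mul_cancel₀ _ (ne_of_gt hy1)
      have key : ∀ x, r * (f (x, θ) * p x) ≤ f (x, θ') * p x := by
        intro x
        rcases eq_or_lt_of_le (hpx x) with hpz | hpz
        · rw [← hpz]; simp
        · rcases lt_trichotomy (f (x, θ)) 0 with hf | hf | hf
          · have hsr := hsrm (fun t => f (x, t)) ⟨x, rfl⟩ (fun t => f (y, t)) ⟨y, rfl⟩ hθ hf hy1
            have h1 : f (y, θ') * f (x, θ) ≤ f (x, θ') * f (y, θ) := by nlinarith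
            have h2 : r * f (x, θ) ≤ f (x, θ') := by nlinarith
            nlinarith
          · have h0 : 0 ≤ f (x, θ') := (hsc x hθ).1 hf.ge
            rw [hf]
            simpa using mul_nonneg h0 hpz.le
          · have hxP : x ∈ P := by simp [hP, hf, hpz]
            have := hymin x hxP
            have h2 : r * f (x, θ) ≤ f (x, θ') := by
              rw [div_le_div_iff₀ hy1 hf] at this
              have := this
              rw [hrdef]
              rw [div_mul_eq_mul_div, div_le_iff₀ hy1]
              nlinarith
            nlinarith
      have hsum : r * (∑ x, f (x, θ) * p x) ≤ ∑ x, f (x, θ') * p x := by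
        rw [Finset.mul_sum]
        exact Finset.sum_le_sum fun x _ => key x
      exact ⟨le_trans (mul_nonneg hr.le hS) hsum,
        fun h => lt_of_lt_of_le (mul_pos hr h) hsum⟩
  constructor
  · intro h
    exact (main h).1
  · intro h
    exact (main (le_of_lt h)).2 h
end

section
/- Let (Θ, ≲) be a nonempty partially ordered set, X a nonempty finite set, and f : X × Θ → ℝ. Suppose that for every lottery p ∈ Δ(X), the map θ ↦ ∑_{x∈X} f(x,θ)·p(x) is single-crossing. Then the family {f(x,·) : x ∈ X} satisfies signed-ratio monotonicity. -/
open Finset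

theorem stmt_11 {Θ X : Type*} [PartialOrder Θ] [Nonempty Θ] [Fintype X] [Nonempty X]
    (f : X × Θ → ℝ)
    (h : ∀ p : X → ℝ, IsLottery p →
      SingleCrossing (fun θ => ∑ x, f (x, θ) * p x)) :
    SignedRatioMonotone {φ : Θ → ℝ | ∃ x : X, φ = fun θ => f (x, θ)} := by
  classical
  rintro φ ⟨x, rfl⟩ ψ ⟨y, rfl⟩ θ θ' hθ hφ hψ
  simp only at hφ hψ ⊢
  have hxy : x ≠ y := by rintro rfl; exact absurd hψ (not_lt.2 hφ.le)
  set A := f (x, θ) with hA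
  set B := f (y, θ) with hB
  have hS : (0:ℝ) < B - A := by linarith
  set a : ℝ := B / (B - A) with ha'
  set b : ℝ := -A / (B - A) with hb'
  have ha : 0 ≤ a := div_nonneg hψ.le hS.le
  have hb : 0 ≤ b := div_nonneg (by linarith) hS.le
  have hab : a + b = 1 := by
    rw [ha', hb', ← add_div, show B + -A = B - A by ring]
    exact div_self hS.ne'
  set p : X → ℝ := fun z => (if z = x then a else 0) + (if z = y then b else 0) with hp
  have hsum : ∀ g : X → ℝ, (∑ z, g z * p z) = g x * a + g y * b := by
    intro g
    simp only [hp, mul_add, Finset.sum_add_distrib, mul_ite, mul_zero,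
      Finset.sum_ite_eq' Finset.univ, Finset.mem_univ, if_true]
  have hlot : IsLottery p := by
    constructor
    · intro z
      constructor
      · positivity
      · simp only [hp]
        rcases eq_or_ne z x with rfl | hzx
        · simp [hxy]; linarith
        · rcases eq_or_ne z y with rfl | hzy
          · simp [hzx]; linarith
          · simp [hzx, hzy]
    · have := hsum (fun _ => 1)
      simp only [one_mul] at this
      rw [this, hab]
  have h0 : (∑ z, f (z, θ) * p z) ≥ 0 := by
    rw [hsum (fun z => f (z, θ))]
    have : f (x, θ) * a + f (y, θ) * b = 0 := by
      rw [ha', hb', ← hA, ← hB]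
      field_simp
      ring
    rw [this]
  have h1 := ((h p hlot) hθ).1 h0
  simp only [ge_iff_le] at h1
  rw [show (∑ z, f (z, θ') * p z) = f (x, θ') * a + f (y, θ') * b from
    hsum (fun z => f (z, θ'))] at h1
  have h2 : f (x, θ') * a + f (y, θ') * b
      = (f (x, θ') * B + f (y, θ') * (-A)) / (B - A) := by
    rw [ha', hb']
    field_simp
  rw [h2, le_div_iff₀ hS, zero_mul] at h1
  linarith
end

section
/- Let X be a nonempty finite set and u, v : X → ℝ. Suppose that: (I) for any x, y ∈ X, u(x) ≥ u(y) implies v(x) ≥ v(y), and u(x) > u(y) implies v(x) > v(y); and (II) for any x, y, z ∈ X with u(x) < u(y) < u(z), (u(z) − u(y))/(u(y) − u(x)) ≥ (v(z) − v(y))/(v(y) − v(x)). Then u is less risk-averse than v, i.e. for every y ∈ X and every lottery p ∈ Δ(X): u(y) ≥ ∑_{x∈X} u(x)p(x) implies v(y) ≥ ∑_{x∈X} v(x)p(x), and u(y) > ∑_{x∈X} u(x)p(x) implies v(y) > ∑_{x∈X} v(x)p(x). -/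
open Finset

theorem stmt_13 {X : Type*} [Fintype X] [Nonempty X] (u v : X → ℝ)
    (hord : ∀ x y : X, (u x ≥ u y → v x ≥ v y) ∧ (u x > u y → v x > v y))
    (hratio : ∀ x y z : X, u x < u y → u y < u z →
      (u z - u y) / (u y - u x) ≥ (v z - v y) / (v y - v x)) :
    LessRiskAverse u v := by
  have hconc : ∀ x z y : X, u x < u y → u y < u z →
      (v z - v y) / (u z - u y) ≤ (v y - v x) / (u y - u x) := by
    intro x z y hxy hyz
    have hD : 0 < v y - v x := by have := (hord y x).2 hxy; linarith
    have hC : 0 < v z - v y := by have := (hord z y).2 hyz; linarith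
    have hB : 0 < u y - u x := by linarith
    have hA : 0 < u z - u y := by linarith
    have h1 := hratio x y z hxy hyz
    rw [ge_iff_le, div_le_div_iff₀ hD hB] at h1
    rw [div_le_div_iff₀ hA hB]
    nlinarith
  intro y p hp
  obtain ⟨l, hl, hle⟩ : ∃ l : ℝ, 0 < l ∧ ∀ x, v x - v y ≤ l * (u x - u y) := by
    by_cases hS : (Finset.univ.filter (fun x => u y < u x)).Nonempty
    · obtain ⟨z, hz, hzmax⟩ :=
        Finset.exists_max_image _ (fun w => (v w - v y) / (u w - u y)) hS
      rw [Finset.mem_filter] at hz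
      have huz : u y < u z := hz.2
      have hvz : v y < v z := (hord z y).2 huz
      refine ⟨(v z - v y) / (u z - u y), div_pos (by linarith) (by linarith), ?_⟩
      intro x
      rcases lt_trichotomy (u x) (u y) with h | h | h
      · have hcc := hconc x z y h huz
        have hvx : v x < v y := (hord y x).2 h
        rw [div_le_div_iff₀ (by linarith) (by linarith)] at hcc
        rw [div_mul_eq_mul_div, le_div_iff₀ (by linarith : (0:ℝ) < u z - u y)]
        nlinarith
      · have h1 : v x ≤ v y := (hord y x).1 h.le
        rw [h, sub_self, mul_zero]
        linarith
      · have hx : x ∈ Finset.univ.filter (fun x => u y < u x) := by simp [h]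
        have hm := hzmax x hx
        rw [div_le_div_iff₀ (by linarith) (by linarith)] at hm
        rw [div_mul_eq_mul_div, le_div_iff₀ (by linarith : (0:ℝ) < u z - u y)]
        nlinarith
    · by_cases hS' : (Finset.univ.filter (fun x => u x < u y)).Nonempty
      · obtain ⟨w, hw, hwmin⟩ :=
          Finset.exists_min_image _ (fun x => (v y - v x) / (u y - u x)) hS'
        rw [Finset.mem_filter] at hw
        have huw : u w < u y := hw.2
        have hvw : v w < v y := (hord y w).2 huw
        refine ⟨(v y - v w) / (u y - u w), div_pos (by linarith) (by linarith), ?_⟩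
        intro x
        have hxle : u x ≤ u y := by
          by_contra hc
          push_neg at hc
          exact hS ⟨x, by simp [hc]⟩
        rcases eq_or_lt_of_le hxle with h | h
        · have h1 : v x ≤ v y := (hord y x).1 h.le
          rw [h, sub_self, mul_zero]
          linarith
        · have hx : x ∈ Finset.univ.filter (fun x => u x < u y) := by simp [h]
          have hm := hwmin x hx
          have hvx : v x < v y := (hord y x).2 h
          rw [div_le_div_iff₀ (by linarith) (by linarith)] at hm
          rw [div_mul_eq_mul_div, le_div_iff₀ (by linarith : (0:ℝ) < u y - u w)]
          nlinarith
      · refine ⟨1, one_pos, ?_⟩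
        intro x
        have hxle : u x ≤ u y := by
          by_contra hc; push_neg at hc; exact hS ⟨x, by simp [hc]⟩
        have hxge : u y ≤ u x := by
          by_contra hc; push_neg at hc; exact hS' ⟨x, by simp [hc]⟩
        have heq : u x = u y := le_antisymm hxle hxge
        have h1 : v x ≤ v y := (hord y x).1 hxle
        rw [heq, sub_self, mul_zero]
        linarith
  have hp1 : ∑ x, p x = 1 := hp.2
  have hpnn : ∀ x, 0 ≤ p x := fun x => (hp.1 x).1
  have key : ∑ x, v x * p x - v y ≤ l * (∑ x, u x * p x - u y) := by
    have e1 : ∑ x, v x * p x - v y = ∑ x, (v x - v y) * p x := by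
      simp [sub_mul, Finset.sum_sub_distrib, ← Finset.mul_sum, hp1]
    have e2 : l * (∑ x, u x * p x - u y) = ∑ x, l * (u x - u y) * p x := by
      simp only [mul_assoc, ← Finset.mul_sum]
      congr 1
      simp [sub_mul, Finset.sum_sub_distrib, ← Finset.mul_sum, hp1]
    rw [e1, e2]
    exact Finset.sum_le_sum fun x _ => mul_le_mul_of_nonneg_right (hle x) (hpnn x)
  constructor
  · intro h
    nlinarith
  · intro h
    nlinarith
end

section
/- Let X be a nonempty finite set and u, v : X → ℝ, and suppose u is less risk-averse than v. Then: (I) for any x, y ∈ X, u(x) ≥ u(y) implies v(x) ≥ v(y), and u(x) > u(y) implies v(x) > v(y); and (II) for any x, y, z ∈ X with u(x) < u(y) < u(z), (u(z) − u(y))/(u(y) − u(x)) ≥ (v(z) − v(y))/(v(y) − v(x)). -/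
open Finset

theorem stmt_14 {X : Type*} [Fintype X] [Nonempty X] (u v : X → ℝ)
    (h : LessRiskAverse u v) :
    (∀ x y : X, (u x ≥ u y → v x ≥ v y) ∧ (u x > u y → v x > v y)) ∧
      (∀ x y z : X, u x < u y → u y < u z →
        (u z - u y) / (u y - u x) ≥ (v z - v y) / (v y - v x)) := by
  classical
  have sum1 : ∀ (f : X → ℝ) (y : X),
      ∑ t, f t * (if t = y then (1:ℝ) else 0) = f y := by
    intro f y
    simp [mul_ite]
  have lot1 : ∀ y : X, IsLottery (fun t => if t = y then (1:ℝ) else 0) := by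
    intro y
    refine ⟨fun t => ?_, ?_⟩
    · dsimp only
      split_ifs <;> norm_num
    · simp
  have part1 : ∀ x y : X, (u x ≥ u y → v x ≥ v y) ∧ (u x > u y → v x > v y) := by
    intro x y
    have H := h x (fun t => if t = y then (1:ℝ) else 0) (lot1 y)
    rw [sum1 u y, sum1 v y] at H
    exact H
  refine ⟨part1, ?_⟩
  intro x y z hxy hyz
  have hxz : u x < u z := hxy.trans hyz
  have hxzne : x ≠ z := fun hh => by rw [hh] at hxz; exact lt_irrefl _ hxz
  have hux : (0:ℝ) < u z - u x := by linarith
  set a : ℝ := (u z - u y) / (u z - u x) with ha_def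
  have ha0 : 0 ≤ a := div_nonneg (by linarith) (le_of_lt hux)
  have ha1 : a ≤ 1 := by
    rw [ha_def, div_le_one hux]; linarith
  have haeq : a * (u z - u x) = u z - u y := div_mul_cancel₀ _ (ne_of_gt hux)
  set p : X → ℝ := fun t =>
    a * (if t = x then 1 else 0) + (1 - a) * (if t = z then 1 else 0) with hp_def
  have hlot : IsLottery p := by
    refine ⟨fun t => ?_, ?_⟩
    · simp only [hp_def]
      split_ifs <;> constructor <;> linarith
    · simp only [hp_def]
      rw [Finset.sum_add_distrib, ← Finset.mul_sum, ← Finset.mul_sum]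
      simp [hxzne]
  have hsum : ∀ f : X → ℝ, ∑ t, f t * p t = a * f x + (1 - a) * f z := by
    intro f
    have key : ∀ t, f t * p t =
        a * (f t * (if t = x then 1 else 0)) + (1 - a) * (f t * (if t = z then 1 else 0)) := by
      intro t
      simp only [hp_def]
      ring
    rw [Finset.sum_congr rfl (fun t _ => key t), Finset.sum_add_distrib,
      ← Finset.mul_sum, ← Finset.mul_sum, sum1 f x, sum1 f z]
  have H := (h y p hlot).1
  rw [hsum u, hsum v] at H
  have huy : u y ≥ a * u x + (1 - a) * u z := by nlinarith [haeq]
  have hv : v y ≥ a * v x + (1 - a) * v z := H huy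
  have hvxy : v x < v y := (part1 y x).2 hxy
  have h1 : (u z - u x) * (a * v x + (1 - a) * v z) ≤ (u z - u x) * v y :=
    mul_le_mul_of_nonneg_left hv (le_of_lt hux)
  have h2 : (u z - u x) * (a * v x + (1 - a) * v z)
      = (u z - u y) * v x + (u y - u x) * v z := by
    linear_combination (v x - v z) * haeq
  have key : (u z - u y) * v x + (u y - u x) * v z ≤ (u z - u x) * v y := by
    rw [← h2]; exact h1
  rw [ge_iff_le, div_le_div_iff₀ (by linarith) (by linarith)]
  nlinarith [key]
end
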